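/- Fix u, v ∈ ℕ. Let G₁ ∈ ℚ[[t]] be the formal power series whose coefficient of t^n is the number of n-step walks in the line model starting at (u,v) and ending at (u+v,0), and let G₂ ∈ ℚ[[t]] be the one counting n-step walks from (u,v) ending at (0,u+v). Then t·(1−p^(2u+2v+4))·G₁ = p^(v+1)·(1−p^(2u+2)) and t·(1−p^(2u+2v+4))·G₂ = p^(u+1)·(1−p^(2v+2)) in ℚ[[t]]. -/

import Mathlib

open scoped Classical

/-- The step-set of the line model. -/
def lineSteps : Finset (ℤ × ℤ) := {(1,-1), (-1,1)}

/-- Position after `i` steps of the walk with step sequence `s` starting at `start`. -/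
def linePos (start : ℤ × ℤ) {n : ℕ} (s : Fin n → ℤ × ℤ) (i : ℕ) : ℤ × ℤ :=
  start + ∑ j ∈ Finset.univ.filter (fun j : Fin n => (j : ℕ) < i), s j

/-- `n`-step walks of the line model starting at `start`, encoded by their step sequences:
every step lies in `{(1,-1),(-1,1)}` and every intermediate point lies in ℕ². -/
noncomputable def lineWalks (start : ℤ × ℤ) (n : ℕ) : Finset (Fin n → ℤ × ℤ) :=
  (Fintype.piFinset fun _ : Fin n => lineSteps).filter
    (fun s => ∀ i ≤ n, 0 ≤ (linePos start s i).1 ∧ 0 ≤ (linePos start s i).2)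

open PowerSeries

lemma linePos_snoc_le (st : ℤ × ℤ) {n : ℕ} (t : Fin n → ℤ × ℤ) (x : ℤ × ℤ) {i : ℕ}
    (hi : i ≤ n) : linePos st (Fin.snoc t x) i = linePos st t i := by
  unfold linePos
  congr 1
  rw [Finset.sum_filter, Finset.sum_filter, Fin.sum_univ_castSucc]
  simp only [Fin.snoc_castSucc, Fin.snoc_last, Fin.coe_castSucc, Fin.val_last]
  rw [if_neg (by omega), add_zero]

lemma linePos_snoc_top (st : ℤ × ℤ) {n : ℕ} (t : Fin n → ℤ × ℤ) (x : ℤ × ℤ) :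
    linePos st (Fin.snoc t x) (n+1) = linePos st t n + x := by
  unfold linePos
  rw [Finset.sum_filter, Finset.sum_filter, Fin.sum_univ_castSucc]
  simp only [Fin.snoc_castSucc, Fin.snoc_last, Fin.coe_castSucc, Fin.val_last]
  rw [if_pos (by omega)]
  have h1 : ∀ j : Fin n, (if (j : ℕ) < n + 1 then t j else 0) = t j := fun j =>
    if_pos (by omega)
  have h2 : ∀ j : Fin n, (if (j : ℕ) < n then t j else 0) = t j := fun j =>
    if_pos j.isLt
  simp only [h1, h2]
  rw [add_assoc]

lemma mem_lineWalks {st : ℤ × ℤ} {n : ℕ} {s : Fin n → ℤ × ℤ} :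
    s ∈ lineWalks st n ↔ (∀ j, s j ∈ lineSteps) ∧
      ∀ i ≤ n, 0 ≤ (linePos st s i).1 ∧ 0 ≤ (linePos st s i).2 := by
  simp [lineWalks, Fintype.mem_piFinset]

lemma linePos_zero (st : ℤ × ℤ) {n : ℕ} (s : Fin n → ℤ × ℤ) :
    linePos st s 0 = st := by
  unfold linePos
  rw [Finset.sum_filter]
  simp

noncomputable def aCnt (u v : ℕ) (k : ℤ) (n : ℕ) : ℕ :=
  ((lineWalks ((u : ℤ), (v : ℤ)) n).filter
      (fun s => linePos ((u : ℤ), (v : ℤ)) s n = (k, (u : ℤ) + v - k))).card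

lemma aCnt_zero (u v : ℕ) (k : ℤ) : aCnt u v k 0 = if k = u then 1 else 0 := by
  unfold aCnt
  have hw : lineWalks ((u : ℤ), (v : ℤ)) 0 = Finset.univ := by
    ext s
    simp only [mem_lineWalks, Finset.mem_univ, iff_true]
    refine ⟨fun j => absurd j.isLt (by omega), fun i hi => ?_⟩
    interval_cases i
    rw [linePos_zero]
    constructor <;> positivity
  rw [hw]
  by_cases h : k = (u : ℤ)
  · subst h
    rw [if_pos rfl]
    have hset : (Finset.univ.filter fun s : Fin 0 → ℤ × ℤ =>
        linePos ((u : ℤ), (v : ℤ)) s 0 = ((u : ℤ), (u : ℤ) + v - u)) = Finset.univ := by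
      apply Finset.filter_true_of_mem
      intro s _
      rw [linePos_zero]
      have : (u : ℤ) + v - u = v := by ring
      rw [this]
    rw [hset, Finset.card_univ]
    exact Fintype.card_unique
  · rw [if_neg h, Finset.card_eq_zero, Finset.filter_eq_empty_iff]
    intro s _
    rw [linePos_zero]
    intro hc
    have h1 := congrArg Prod.fst hc
    simp only [Prod.fst] at h1
    exact h h1.symm

lemma aCnt_out (u v : ℕ) (k : ℤ) (h : k < 0 ∨ ((u : ℤ) + v) < k) (n : ℕ) :
    aCnt u v k n = 0 := by
  unfold aCnt
  rw [Finset.card_eq_zero, Finset.filter_eq_empty_iff]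
  intro s hs hc
  obtain ⟨-, hpos⟩ := mem_lineWalks.mp hs
  obtain ⟨h1, h2⟩ := hpos n le_rfl
  rw [hc] at h1 h2
  simp only [Prod.fst, Prod.snd] at h1 h2
  omega

lemma lineSteps_sum {x : ℤ × ℤ} (hx : x ∈ lineSteps) : x.1 + x.2 = 0 := by
  simp only [lineSteps, Finset.mem_insert, Finset.mem_singleton] at hx
  rcases hx with h | h <;> simp [h]

lemma aCnt_rec (u v : ℕ) (k : ℤ) (hk0 : 0 ≤ k) (hkN : k ≤ (u : ℤ) + v) (n : ℕ) :
    aCnt u v k (n+1) = aCnt u v (k-1) n + aCnt u v (k+1) n := by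
  classical
  set st : ℤ × ℤ := ((u : ℤ), (v : ℤ)) with hst
  obtain ⟨N, hN⟩ : ∃ N : ℤ, N = (u : ℤ) + v := ⟨_, rfl⟩
  rw [← hN] at hkN
  set S := (lineWalks st (n+1)).filter
      (fun s => linePos st s (n+1) = (k, N - k)) with hS
  have key : ∀ x : ℤ × ℤ, x ∈ lineSteps →
      (S.filter (fun s => s (Fin.last n) = x)).card
        = ((lineWalks st n).filter
            (fun s => linePos st s n = (k - x.1, N - (k - x.1)))).card := by
    intro x hx
    have hx2 : x.1 + x.2 = 0 := lineSteps_sum hx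
    have hend_eq : ((k, N - k) : ℤ × ℤ) - x = (k - x.1, N - (k - x.1)) := by
      rw [show ((k, N - k) : ℤ × ℤ) - x = (k - x.1, (N - k) - x.2) from rfl, Prod.mk.injEq]
      exact ⟨rfl, by omega⟩
    refine Finset.card_bij' (fun s _ => Fin.init s) (fun t _ => Fin.snoc t x) ?hi ?hj ?hleft ?hright
    case hi =>
      intro s hs
      obtain ⟨hs1, hlast⟩ := Finset.mem_filter.mp hs
      rw [hS] at hs1
      obtain ⟨hs2, hend⟩ := Finset.mem_filter.mp hs1
      obtain ⟨hsteps, hpos⟩ := mem_lineWalks.mp hs2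
      have hrep : Fin.snoc (Fin.init s) x = s := by
        rw [← hlast]; exact Fin.snoc_init_self s
      rw [Finset.mem_filter]
      constructor
      · rw [mem_lineWalks]
        refine ⟨fun j => hsteps j.castSucc, fun i hi => ?_⟩
        rw [← linePos_snoc_le st (Fin.init s) x hi, hrep]
        exact hpos i (by omega)
      · have htop := linePos_snoc_top st (Fin.init s) x
        rw [hrep, hend] at htop
        have h2 : linePos st (Fin.init s) n = ((k, N - k) : ℤ × ℤ) - x := by
          rw [eq_sub_iff_add_eq, ← htop]
        rw [h2, hend_eq]
    case hj =>
      intro t ht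
      obtain ⟨ht1, hend⟩ := Finset.mem_filter.mp ht
      obtain ⟨hsteps, hpos⟩ := mem_lineWalks.mp (show t ∈ lineWalks st n from ht1)
      have htop : linePos st (Fin.snoc t x) (n+1) = (k, N - k) := by
        rw [linePos_snoc_top, hend,
          show (k - x.1, N - (k - x.1)) + x = (k - x.1 + x.1, N - (k - x.1) + x.2) from rfl,
          Prod.mk.injEq]
        exact ⟨by ring, by omega⟩
      rw [Finset.mem_filter, Finset.mem_filter]
      refine ⟨⟨?_, htop⟩, by simp⟩
      rw [mem_lineWalks]
      refine ⟨fun j => ?_, fun i hi => ?_⟩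
      · rcases Fin.eq_castSucc_or_eq_last j with ⟨j', rfl⟩ | rfl
        · simpa using hsteps j'
        · simpa using hx
      · rcases Nat.lt_or_ge i (n+1) with h | h
        · rw [linePos_snoc_le st t x (by omega)]
          exact hpos i (by omega)
        · have hi' : i = n + 1 := by omega
          subst hi'
          rw [htop]
          exact ⟨hk0, by omega⟩
    case hleft =>
      intro s hs
      obtain ⟨-, hlast⟩ := Finset.mem_filter.mp hs
      show Fin.snoc (Fin.init s) x = s
      rw [← hlast]; exact Fin.snoc_init_self s
    case hright =>
      intro t ht
      exact Fin.init_snoc (α := fun _ : Fin (n+1) => ℤ × ℤ) x t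
  have hsplit : (S.filter (fun s => s (Fin.last n) = ((1 : ℤ),(-1 : ℤ)))).card
      + (S.filter (fun s => ¬ s (Fin.last n) = ((1 : ℤ),(-1 : ℤ)))).card = S.card :=
    Finset.card_filter_add_card_filter_not _
  have hneg : S.filter (fun s => ¬ s (Fin.last n) = ((1 : ℤ),(-1 : ℤ)))
      = S.filter (fun s => s (Fin.last n) = ((-1 : ℤ),(1 : ℤ))) := by
    apply Finset.filter_congr
    intro s hs
    have hs' : s ∈ lineWalks st (n+1) := (Finset.mem_filter.mp hs).1
    have hstep : s (Fin.last n) ∈ lineSteps := (mem_lineWalks.mp hs').1 _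
    simp only [lineSteps, Finset.mem_insert, Finset.mem_singleton] at hstep
    constructor
    · intro h; rcases hstep with h' | h' <;> simp_all
    · intro h; simp [h]
  have h1 := key ((1 : ℤ),(-1 : ℤ)) (by simp [lineSteps])
  have h2 := key ((-1 : ℤ),(1 : ℤ)) (by simp [lineSteps])
  unfold aCnt
  rw [← hN, ← hst, ← hS, ← hsplit, hneg, h1, h2]
  norm_num


noncomputable def Gs (p : PowerSeries ℚ) (m : ℕ) : PowerSeries ℚ :=
  ∑ j ∈ Finset.range m, p ^ (2*j)

lemma Gs_zero (p : PowerSeries ℚ) : Gs p 0 = 0 := by simp [Gs]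

lemma Gs_one (p : PowerSeries ℚ) : Gs p 1 = 1 := by simp [Gs]

lemma Gs_succ' (p : PowerSeries ℚ) (m : ℕ) : Gs p (m+1) = 1 + p^2 * Gs p m := by
  rw [Gs, Gs, Finset.sum_range_succ', Finset.mul_sum]
  have h : ∑ j ∈ Finset.range m, p ^ (2*(j+1)) = ∑ j ∈ Finset.range m, p^2 * p^(2*j) :=
    Finset.sum_congr rfl fun j _ => by ring
  rw [h]
  norm_num [add_comm]

lemma hG (p : PowerSeries ℚ) (m : ℕ) : (1 - p^2) * Gs p m = 1 - p^(2*m) := by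
  have h := geom_sum_mul (p^2) m
  have h2 : Gs p m = ∑ j ∈ Finset.range m, (p^2)^j := by
    apply Finset.sum_congr rfl
    intro j _
    rw [← pow_mul]
  rw [h2]
  linear_combination -h - pow_mul p 2 m

section
variable {p : PowerSeries ℚ} (hp0 : PowerSeries.constantCoeff p = 0)
  (hp : p = PowerSeries.X * (1 + p ^ 2))

include hp in
lemma core (w l : ℕ) (C : PowerSeries ℚ) :
    p^(w+1) * C * Gs p (l+1)
      = X * (p^(w+2) * C * Gs p l + p^w * C * Gs p (l+2)) := by
  linear_combination (p^w * C * Gs p (l+1)) * hp - (X * p^w * C) * (Gs_succ' p (l+1))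
    + (X * p^w * C) * (Gs_succ' p l)

include hp0 in
lemma one_sub_sq_ne : (1 - p^2 : PowerSeries ℚ) ≠ 0 := by
  intro h
  have := congrArg (PowerSeries.constantCoeff) h
  simp [hp0] at this

include hp0 hp in
lemma coreB (u v : ℕ) :
    p * (1 - p^(2*v+2)) * Gs p (u+1)
      = X * (1 - p^(2*u+2*v+4))
        + X * (p^2 * (1 - p^(2*v+2)) * Gs p u + p^2 * (1 - p^(2*u+2)) * Gs p v) := by
  apply mul_left_cancel₀ (one_sub_sq_ne hp0)
  linear_combination (p * (1 - p^(2*v+2))) * hG p (u+1) - X*p^2*(1 - p^(2*v+2)) * hG p u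
    - X*p^2*(1 - p^(2*u+2)) * hG p v + ((1-p^(2*u+2))*(1-p^(2*v+2))) * hp

include hp0 in
lemma Rsym (u v : ℕ) :
    (1 - p^(2*v+2)) * Gs p (u+1) = (1 - p^(2*u+2)) * Gs p (v+1) := by
  apply mul_left_cancel₀ (one_sub_sq_ne hp0)
  linear_combination (1 - p^(2*v+2)) * hG p (u+1) - (1 - p^(2*u+2)) * hG p (v+1)

end

noncomputable def Rn (u v : ℕ) (p : PowerSeries ℚ) (m : ℕ) : PowerSeries ℚ :=
  if m ≤ u then p ^ (u - m + 1) * (1 - p^(2*v+2)) * Gs p (m + 1)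
  else p ^ (m - u + 1) * (1 - p^(2*u+2)) * Gs p (u + v - m + 1)

noncomputable def Rk (u v : ℕ) (p : PowerSeries ℚ) (k : ℤ) : PowerSeries ℚ :=
  if 0 ≤ k ∧ k ≤ (u:ℤ) + v then Rn u v p k.toNat else 0

lemma Rk_coe (u v : ℕ) (p : PowerSeries ℚ) (m : ℕ) (h : m ≤ u + v) :
    Rk u v p (m : ℤ) = Rn u v p m := by
  rw [Rk, if_pos ⟨by positivity, by exact_mod_cast h⟩, Int.toNat_natCast]

lemma Rk_out (u v : ℕ) (p : PowerSeries ℚ) (k : ℤ) (h : k < 0 ∨ (u:ℤ) + v < k) :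
    Rk u v p k = 0 := by
  rw [Rk, if_neg (by omega)]

section
variable {p : PowerSeries ℚ} (hp0 : PowerSeries.constantCoeff p = 0)
  (hp : p = PowerSeries.X * (1 + p ^ 2))

include hp0 hp in
lemma RkRec (u v : ℕ) (k : ℤ) (h0 : 0 ≤ k) (hN : k ≤ (u:ℤ) + v) :
    Rk u v p k = (if k = (u:ℤ) then X * (1 - p^(2*u+2*v+4)) else 0)
      + X * (Rk u v p (k-1) + Rk u v p (k+1)) := by
  lift k to ℕ using h0 with m
  have hm : m ≤ u + v := by exact_mod_cast hN
  set C := (1 - p^(2*v+2)) with hC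
  set D := (1 - p^(2*u+2)) with hD
  rcases lt_trichotomy m u with hlt | rfl | hgt
  · -- m < u
    set w := u - m with hw
    have hw1 : 1 ≤ w := by omega
    have hRk : Rk u v p (m : ℤ) = p^(w+1) * C * Gs p (m+1) := by
      rw [Rk_coe u v p m hm, Rn, if_pos (by omega),
        show u - m + 1 = w + 1 from by omega]
    have hL : Rk u v p ((m : ℤ) - 1) = p^(w+2) * C * Gs p m := by
      rcases Nat.eq_zero_or_pos m with rfl | hmpos
      · rw [Rk_out u v p _ (by omega), Gs_zero, mul_zero]
      · rw [show (m : ℤ) - 1 = ((m - 1 : ℕ) : ℤ) from by push_cast [hmpos]; ring,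
          Rk_coe u v p _ (by omega), Rn, if_pos (by omega),
          show u - (m-1) + 1 = w + 2 from by omega,
          show m - 1 + 1 = m from by omega]
    have hR : Rk u v p ((m : ℤ) + 1) = p^w * C * Gs p (m+2) := by
      rw [show (m : ℤ) + 1 = ((m + 1 : ℕ) : ℤ) from by push_cast; ring,
        Rk_coe u v p _ (by omega), Rn, if_pos (by omega),
        show u - (m+1) + 1 = w from by omega]
    rw [hRk, hL, hR, if_neg (by omega)]
    rw [zero_add]
    exact core hp w m C
  · -- m = u
    have hRk : Rk m v p (m : ℤ) = p * C * Gs p (m+1) := by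
      rw [Rk_coe m v p m (by omega), Rn, if_pos le_rfl,
        show m - m + 1 = 1 from by omega, pow_one]
    have hL : Rk m v p ((m : ℤ) - 1) = p^2 * C * Gs p m := by
      rcases Nat.eq_zero_or_pos m with rfl | hmpos2
      · rw [Rk_out 0 v p _ (by omega), Gs_zero, mul_zero]
      · rw [show (m : ℤ) - 1 = ((m - 1 : ℕ) : ℤ) from by push_cast [hmpos2]; ring,
          Rk_coe m v p _ (by omega), Rn, if_pos (by omega),
          show m - (m-1) + 1 = 2 from by omega,
          show m - 1 + 1 = m from by omega]
    have hR : Rk m v p ((m : ℤ) + 1) = p^2 * D * Gs p v := by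
      rcases Nat.eq_zero_or_pos v with rfl | hvpos
      · rw [Rk_out m 0 p _ (by omega), Gs_zero, mul_zero]
      · rw [show (m : ℤ) + 1 = ((m + 1 : ℕ) : ℤ) from by push_cast; ring,
          Rk_coe m v p _ (by omega), Rn, if_neg (by omega),
          show m + 1 - m + 1 = 2 from by omega,
          show m + v - (m+1) + 1 = v from by omega]
    rw [hRk, hL, hR, if_pos rfl]
    exact coreB hp0 hp m v
  · -- m > u
    set w := m - u with hw
    set l := u + v - m with hl
    have hw1 : 1 ≤ w := by omega
    have hRk : Rk u v p (m : ℤ) = p^(w+1) * D * Gs p (l+1) := by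
      rw [Rk_coe u v p m hm, Rn, if_neg (by omega),
        show m - u + 1 = w + 1 from by omega,
        show u + v - m + 1 = l + 1 from by omega]
    have hR : Rk u v p ((m : ℤ) + 1) = p^(w+2) * D * Gs p l := by
      rcases Nat.eq_or_lt_of_le hm with heq | hmlt
      · rw [Rk_out u v p _ (by omega), show l = 0 from by omega, Gs_zero, mul_zero]
      · rw [show (m : ℤ) + 1 = ((m + 1 : ℕ) : ℤ) from by push_cast; ring,
          Rk_coe u v p _ (by omega), Rn, if_neg (by omega),
          show m + 1 - u + 1 = w + 2 from by omega,
          show u + v - (m+1) + 1 = l from by omega]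
    have hL : Rk u v p ((m : ℤ) - 1) = p^w * D * Gs p (l+2) := by
      rcases Nat.eq_or_lt_of_le hgt with heq | hgt'
      · -- m = u + 1
        rw [show (m : ℤ) - 1 = ((u : ℕ) : ℤ) from by omega,
          Rk_coe u v p u (by omega), Rn, if_pos le_rfl,
          show u - u + 1 = 1 from by omega, pow_one,
          show w = 1 from by omega, pow_one]
        have hv : l + 2 = v + 1 := by omega
        rw [hv]
        rw [mul_assoc, mul_assoc, Rsym hp0 u v]
      · rw [show (m : ℤ) - 1 = ((m - 1 : ℕ) : ℤ) from by push_cast [show 1 ≤ m from by omega]; ring,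
          Rk_coe u v p _ (by omega), Rn, if_neg (by omega),
          show m - 1 - u + 1 = w from by omega,
          show u + v - (m-1) + 1 = l + 2 from by omega]
    rw [hRk, hL, hR, if_neg (by omega)]
    rw [zero_add]
    linear_combination core hp w l D

end


noncomputable def Fk (u v : ℕ) (k : ℤ) : PowerSeries ℚ :=
  PowerSeries.mk fun n => (aCnt u v k n : ℚ)

lemma Fk_out (u v : ℕ) (k : ℤ) (h : k < 0 ∨ (u:ℤ) + v < k) : Fk u v k = 0 := by
  ext n
  simp [Fk, aCnt_out u v k h n]

lemma Fk_rec (u v : ℕ) (k : ℤ) (h0 : 0 ≤ k) (hN : k ≤ (u:ℤ) + v) :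
    Fk u v k = (if k = (u:ℤ) then 1 else 0) + X * (Fk u v (k-1) + Fk u v (k+1)) := by
  ext n
  cases n with
  | zero =>
    rw [map_add]
    have h1 : (PowerSeries.coeff 0) (X * (Fk u v (k-1) + Fk u v (k+1))) = 0 := by
      simp [PowerSeries.coeff_zero_eq_constantCoeff]
    rw [h1, add_zero]
    simp only [Fk, PowerSeries.coeff_mk, aCnt_zero]
    split_ifs <;> simp
  | succ n =>
    rw [map_add, PowerSeries.coeff_succ_X_mul, map_add]
    have h1 : (PowerSeries.coeff (n+1)) (if k = (u:ℤ) then (1 : PowerSeries ℚ) else 0) = 0 := by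
      split_ifs <;> simp [PowerSeries.coeff_one]
    rw [h1, zero_add]
    simp only [Fk, PowerSeries.coeff_mk]
    rw [aCnt_rec u v k h0 hN n]
    push_cast
    ring

section
variable {p : PowerSeries ℚ} (hp0 : PowerSeries.constantCoeff p = 0)
  (hp : p = PowerSeries.X * (1 + p ^ 2))

include hp0 hp in
lemma main_eq (u v : ℕ) (k : ℤ) :
    X * (1 - p^(2*u+2*v+4)) * Fk u v k = Rk u v p k := by
  have hDout : ∀ j : ℤ, j < 0 ∨ (u:ℤ) + v < j →
      X * (1 - p^(2*u+2*v+4)) * Fk u v j - Rk u v p j = 0 := by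
    intro j hj
    rw [Fk_out u v j hj, Rk_out u v p j hj]
    ring
  have hDrec : ∀ j : ℤ, 0 ≤ j → j ≤ (u:ℤ) + v →
      X * (1 - p^(2*u+2*v+4)) * Fk u v j - Rk u v p j
        = X * ((X * (1 - p^(2*u+2*v+4)) * Fk u v (j-1) - Rk u v p (j-1))
             + (X * (1 - p^(2*u+2*v+4)) * Fk u v (j+1) - Rk u v p (j+1))) := by
    intro j h0 hN
    have hF := Fk_rec u v j h0 hN
    have hR := RkRec hp0 hp u v j h0 hN
    by_cases hju : j = (u:ℤ)
    · rw [if_pos hju] at hF hR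
      linear_combination (X * (1 - p^(2*u+2*v+4))) * hF - hR
    · rw [if_neg hju] at hF hR
      linear_combination (X * (1 - p^(2*u+2*v+4))) * hF - hR
  have key : ∀ n : ℕ, ∀ j : ℤ,
      PowerSeries.coeff n (X * (1 - p^(2*u+2*v+4)) * Fk u v j - Rk u v p j) = 0 := by
    intro n
    induction n using Nat.strong_induction_on with
    | _ n ih =>
      intro j
      by_cases hj : 0 ≤ j ∧ j ≤ (u:ℤ) + v
      · rw [hDrec j hj.1 hj.2]
        cases n with
        | zero => simp [PowerSeries.coeff_zero_eq_constantCoeff]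
        | succ n =>
          rw [PowerSeries.coeff_succ_X_mul, map_add, ih n (by omega) (j-1),
            ih n (by omega) (j+1), add_zero]
      · rw [hDout j (by omega), map_zero]
  have hz : X * (1 - p^(2*u+2*v+4)) * Fk u v k - Rk u v p k = 0 :=
    PowerSeries.ext fun n => by rw [key n k, map_zero]
  exact sub_eq_zero.mp hz

include hp0 hp in
lemma RnN (u v : ℕ) : Rn u v p (u + v) = p^(v+1) * (1 - p^(2*u+2)) := by
  cases v with
  | zero =>
    rw [Rn, if_pos (by omega), show u - (u + 0) + 1 = 1 from by omega, pow_one,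
      show u + 0 + 1 = u + 1 from by omega]
    rw [show (2*0+2 : ℕ) = 2 from by norm_num]
    rw [mul_assoc, hG p (u+1), show 2*(u+1) = 2*u+2 from by ring]
  | succ v' =>
    rw [Rn, if_neg (by omega), show u + (v'+1) - u + 1 = v' + 1 + 1 from by omega,
      show u + (v'+1) - (u + (v'+1)) + 1 = 1 from by omega, Gs_one, mul_one]

lemma Rn0 (u v : ℕ) : Rn u v p 0 = p^(u+1) * (1 - p^(2*v+2)) := by
  rw [Rn, if_pos (by omega), show u - 0 + 1 = u + 1 from by omega, Gs_one, mul_one]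

end


/-- Generating functions of line-model walks from `(u,v)` ending at the
two boundary points `(u+v, 0)` and `(0, u+v)`. -/
theorem line_boundary_gf (u v : ℕ) (p : PowerSeries ℚ)
    (hp0 : PowerSeries.constantCoeff p = 0)
    (hp : p = PowerSeries.X * (1 + p ^ 2)) :
    PowerSeries.X * (1 - p ^ (2 * u + 2 * v + 4)) *
          (PowerSeries.mk fun n =>
            (((lineWalks ((u : ℤ), (v : ℤ)) n).filter
                (fun s => linePos ((u : ℤ), (v : ℤ)) s n = (((u : ℤ) + v), 0))).card : ℚ))
        = p ^ (v + 1) * (1 - p ^ (2 * u + 2)) ∧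
      PowerSeries.X * (1 - p ^ (2 * u + 2 * v + 4)) *
          (PowerSeries.mk fun n =>
            (((lineWalks ((u : ℤ), (v : ℤ)) n).filter
                (fun s => linePos ((u : ℤ), (v : ℤ)) s n = (0, ((u : ℤ) + v)))).card : ℚ))
        = p ^ (u + 1) * (1 - p ^ (2 * v + 2)) := by
  constructor
  · have h := main_eq hp0 hp u v ((u:ℤ) + v)
    have hmk : (PowerSeries.mk fun n =>
        (((lineWalks ((u : ℤ), (v : ℤ)) n).filter
            (fun s => linePos ((u : ℤ), (v : ℤ)) s n = (((u : ℤ) + v), 0))).card : ℚ))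
          = Fk u v ((u:ℤ) + v) := by
      unfold Fk aCnt
      congr 1
      funext n
      norm_num
    rw [show ((u:ℤ) + v) = ((u + v : ℕ) : ℤ) from by push_cast; ring,
      Rk_coe u v p (u+v) le_rfl, RnN hp0 hp u v] at h
    rw [hmk, show ((u:ℤ) + v) = ((u + v : ℕ) : ℤ) from by push_cast; ring]
    exact h
  · have h := main_eq hp0 hp u v 0
    have hmk : (PowerSeries.mk fun n =>
        (((lineWalks ((u : ℤ), (v : ℤ)) n).filter
            (fun s => linePos ((u : ℤ), (v : ℤ)) s n = (0, ((u : ℤ) + v)))).card : ℚ))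
          = Fk u v 0 := by
      unfold Fk aCnt
      congr 1
    rw [show (0:ℤ) = ((0 : ℕ) : ℤ) from rfl, Rk_coe u v p 0 (by omega), Rn0 u v] at h
    rw [hmk]
    exact h
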